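/- Let m ≥ 1 and x ≥ m be integers, μ > 0 a real, and set r = m and λ = m·μ. Then B_{m,x}(m) − B_{m,x+1}(m) > 0 and, with c = (1 − B_m(m))/(m·B_m(m)), one has (1/λ)·(L_{m,x+1}(m) − L_{m,x}(m)) / (B_{m,x}(m) − B_{m,x+1}(m)) = [ (1/2)·(x − m + 2 + 2·m·c)·(x − m + 1) + m ] / (m·μ). -/

import Mathlib

/-- `a_j(r)` coefficients of the M/M/m/n queue. -/
noncomputable def aCoef (m j : ℕ) (r : ℝ) : ℝ :=
  if j ≤ m then r ^ j / (Nat.factorial j : ℝ)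
  else (r ^ m / (Nat.factorial m : ℝ)) * (r / (m : ℝ)) ^ (j - m)

/-- Blocking probability `B_{m,n}(r)` of the M/M/m/n queue with offered load `r`. -/
noncomputable def Bmn (m n : ℕ) (r : ℝ) : ℝ :=
  aCoef m n r / ∑ j ∈ Finset.range (n + 1), aCoef m j r

/-- Mean number in system `L_{m,n}(r)` of the M/M/m/n queue with offered load `r`. -/
noncomputable def Lmn (m n : ℕ) (r : ℝ) : ℝ :=
  (∑ j ∈ Finset.range (n + 1), (j : ℝ) * aCoef m j r) /
    ∑ j ∈ Finset.range (n + 1), aCoef m j r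

/-- Erlang-B formula `B_m(r)`. -/
noncomputable def erlangB (m : ℕ) (r : ℝ) : ℝ :=
  (r ^ m / (Nat.factorial m : ℝ)) / ∑ j ∈ Finset.range (m + 1), r ^ j / (Nat.factorial j : ℝ)

lemma aCoef_of_ge (m n : ℕ) (hm : 1 ≤ m) (hn : m ≤ n) :
    aCoef m n (m : ℝ) = (m : ℝ) ^ m / (Nat.factorial m : ℝ) := by
  unfold aCoef
  rcases eq_or_lt_of_le hn with h | h
  · rw [if_pos h.ge]
    rw [h]
  · rw [if_neg (not_le.mpr h)]
    have hm0 : (m : ℝ) ≠ 0 := by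
      exact_mod_cast Nat.one_le_iff_ne_zero.mp hm
    rw [div_self hm0, one_pow, mul_one]

lemma aCoef_of_le (m n : ℕ) (hn : n ≤ m) :
    aCoef m n (m : ℝ) = (m : ℝ) ^ n / (Nat.factorial n : ℝ) := by
  unfold aCoef; rw [if_pos hn]

lemma sum_aCoef (m : ℕ) (hm : 1 ≤ m) :
    ∀ x : ℕ, m ≤ x →
      ∑ j ∈ Finset.range (x + 1), aCoef m j (m : ℝ) =
        (∑ j ∈ Finset.range (m + 1), (m : ℝ) ^ j / (Nat.factorial j : ℝ)) +
          ((x : ℝ) - (m : ℝ)) * ((m : ℝ) ^ m / (Nat.factorial m : ℝ)) := by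
  intro x
  induction x with
  | zero => intro hx; exact absurd (hm.trans hx) (by omega)
  | succ n ih =>
    intro hx
    rcases eq_or_lt_of_le hx with h | h
    · rw [← h]
      have hrw : ∀ j ∈ Finset.range (m + 1), aCoef m j (m : ℝ) =
          (m : ℝ) ^ j / (Nat.factorial j : ℝ) := by
        intro j hj
        exact aCoef_of_le m j (by simp only [Finset.mem_range] at hj; omega)
      rw [Finset.sum_congr rfl hrw]
      ring
    · have hn : m ≤ n := by omega
      rw [Finset.sum_range_succ, ih hn, aCoef_of_ge m (n + 1) hm (by omega)]
      push_cast
      ring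

lemma sum_j_aCoef (m : ℕ) (hm : 1 ≤ m) :
    ∀ x : ℕ, m ≤ x →
      ∑ j ∈ Finset.range (x + 1), (j : ℝ) * aCoef m j (m : ℝ) =
        (m : ℝ) * ((∑ j ∈ Finset.range (m + 1), (m : ℝ) ^ j / (Nat.factorial j : ℝ)) -
            (m : ℝ) ^ m / (Nat.factorial m : ℝ)) +
          ((m : ℝ) ^ m / (Nat.factorial m : ℝ)) *
            (((x : ℝ) - (m : ℝ)) * (m : ℝ) +
              ((x : ℝ) - (m : ℝ)) * (((x : ℝ) - (m : ℝ)) + 1) / 2) := by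
  intro x
  induction x with
  | zero => intro hx; exact absurd (hm.trans hx) (by omega)
  | succ n ih =>
    intro hx
    rcases eq_or_lt_of_le hx with h | h
    · rw [← h]
      have hrw : ∀ j ∈ Finset.range (m + 1), (j : ℝ) * aCoef m j (m : ℝ) =
          (j : ℝ) * ((m : ℝ) ^ j / (Nat.factorial j : ℝ)) := by
        intro j hj
        rw [aCoef_of_le m j (by simp only [Finset.mem_range] at hj; omega)]
      rw [Finset.sum_congr rfl hrw]
      rw [Finset.sum_range_succ']
      have hterm : ∀ j : ℕ, ((j + 1 : ℕ) : ℝ) * ((m : ℝ) ^ (j + 1) / (Nat.factorial (j + 1) : ℝ)) =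
          (m : ℝ) * ((m : ℝ) ^ j / (Nat.factorial j : ℝ)) := by
        intro j
        have h1 : (Nat.factorial (j + 1) : ℝ) = ((j : ℝ) + 1) * (Nat.factorial j : ℝ) := by
          rw [Nat.factorial_succ]; push_cast; ring
        have h2 : (Nat.factorial j : ℝ) ≠ 0 := by
          exact_mod_cast (Nat.factorial_pos j).ne'
        have h3 : ((j : ℝ) + 1) ≠ 0 := by positivity
        rw [h1, pow_succ]
        push_cast
        field_simp
      rw [Finset.sum_congr rfl (fun j _ => hterm j)]
      rw [← Finset.mul_sum]
      have hS : ∑ j ∈ Finset.range (m + 1), (m : ℝ) ^ j / (Nat.factorial j : ℝ) =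
          (∑ j ∈ Finset.range m, (m : ℝ) ^ j / (Nat.factorial j : ℝ)) +
            (m : ℝ) ^ m / (Nat.factorial m : ℝ) := Finset.sum_range_succ _ m
      rw [hS]
      push_cast
      ring
    · have hn : m ≤ n := by omega
      rw [Finset.sum_range_succ, ih hn, aCoef_of_ge m (n + 1) hm (by omega)]
      push_cast
      ring

/-- closed formula for the second-order RB index when `x ≥ m` and `r = m`. -/
theorem stmt_3 (m x : ℕ) (hm : 1 ≤ m) (hx : m ≤ x) (μ : ℝ) (hμ : 0 < μ)
    (r lam : ℝ) (hr : r = (m : ℝ)) (hlam : lam = (m : ℝ) * μ)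
    (c : ℝ) (hc : c = (1 - erlangB m (m : ℝ)) / ((m : ℝ) * erlangB m (m : ℝ))) :
    0 < Bmn m x (m : ℝ) - Bmn m (x + 1) (m : ℝ) ∧
    (1 / lam) * (Lmn m (x + 1) (m : ℝ) - Lmn m x (m : ℝ)) /
        (Bmn m x (m : ℝ) - Bmn m (x + 1) (m : ℝ)) =
      ((1 / 2) * ((x : ℝ) - (m : ℝ) + 2 + 2 * (m : ℝ) * c) * ((x : ℝ) - (m : ℝ) + 1) + (m : ℝ)) /
        ((m : ℝ) * μ) := by
  have hm0 : (0 : ℝ) < (m : ℝ) := by exact_mod_cast hm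
  set A : ℝ := (m : ℝ) ^ m / (Nat.factorial m : ℝ) with hA_def
  set S : ℝ := ∑ j ∈ Finset.range (m + 1), (m : ℝ) ^ j / (Nat.factorial j : ℝ) with hS_def
  have hA : 0 < A := by
    apply div_pos (pow_pos hm0 m)
    exact_mod_cast Nat.factorial_pos m
  have hAS : A ≤ S := by
    apply Finset.single_le_sum (f := fun j => (m : ℝ) ^ j / (Nat.factorial j : ℝ))
    · intro i _
      apply div_nonneg (pow_nonneg hm0.le i)
      exact_mod_cast (Nat.factorial_pos i).le
    · exact Finset.self_mem_range_succ m
  have hS : 0 < S := lt_of_lt_of_le hA hAS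
  set k : ℝ := (x : ℝ) - (m : ℝ) with hk_def
  have hk : 0 ≤ k := by
    have : (m : ℝ) ≤ (x : ℝ) := by exact_mod_cast hx
    simp [hk_def]; linarith
  have hSum0 : ∑ j ∈ Finset.range (x + 1), aCoef m j (m : ℝ) = S + k * A :=
    sum_aCoef m hm x hx
  have hSum1 : ∑ j ∈ Finset.range (x + 1 + 1), aCoef m j (m : ℝ) = S + (k + 1) * A := by
    rw [sum_aCoef m hm (x + 1) (by omega), ← hS_def, ← hA_def]
    push_cast
    ring
  have hN0 : ∑ j ∈ Finset.range (x + 1), (j : ℝ) * aCoef m j (m : ℝ) =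
      (m : ℝ) * (S - A) + A * (k * (m : ℝ) + k * (k + 1) / 2) := sum_j_aCoef m hm x hx
  have hN1 : ∑ j ∈ Finset.range (x + 1 + 1), (j : ℝ) * aCoef m j (m : ℝ) =
      (m : ℝ) * (S - A) + A * ((k + 1) * (m : ℝ) + (k + 1) * (k + 2) / 2) := by
    rw [sum_j_aCoef m hm (x + 1) (by omega), ← hS_def, ← hA_def]
    push_cast
    ring
  have haX : aCoef m x (m : ℝ) = A := aCoef_of_ge m x hm hx
  have haX1 : aCoef m (x + 1) (m : ℝ) = A := aCoef_of_ge m (x + 1) hm (by omega)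
  have hP : (0 : ℝ) < S + k * A := by positivity
  have hQ : (0 : ℝ) < S + (k + 1) * A := by positivity
  have hB0 : Bmn m x (m : ℝ) = A / (S + k * A) := by
    rw [Bmn, haX, hSum0]
  have hB1 : Bmn m (x + 1) (m : ℝ) = A / (S + (k + 1) * A) := by
    rw [Bmn, haX1, hSum1]
  have hBdiff : Bmn m x (m : ℝ) - Bmn m (x + 1) (m : ℝ) =
      A * A / ((S + k * A) * (S + (k + 1) * A)) := by
    rw [hB0, hB1]
    field_simp
    ring
  have hpos : 0 < Bmn m x (m : ℝ) - Bmn m (x + 1) (m : ℝ) := by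
    rw [hBdiff]; positivity
  refine ⟨hpos, ?_⟩
  have hL0 : Lmn m x (m : ℝ) =
      ((m : ℝ) * (S - A) + A * (k * (m : ℝ) + k * (k + 1) / 2)) / (S + k * A) := by
    rw [Lmn, hN0, hSum0]
  have hL1 : Lmn m (x + 1) (m : ℝ) =
      ((m : ℝ) * (S - A) + A * ((k + 1) * (m : ℝ) + (k + 1) * (k + 2) / 2)) /
        (S + (k + 1) * A) := by
    rw [Lmn, hN1, hSum1]
  have herl : erlangB m (m : ℝ) = A / S := rfl
  have hcval : (m : ℝ) * A * c = S - A := by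
    rw [hc, herl]
    field_simp
  have hmc : c = (S - A) / ((m : ℝ) * A) := by
    rw [← hcval]; field_simp
  rw [hL0, hL1, hBdiff, hlam, hmc]
  field_simp
  ring
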